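/- arXiv:0910.2443 — 3 statements merged into one kernel-verified Lean document; each statement's English description precedes it below -/
import Mathlib

section
/- For a k×ℓ matrix x and an ℓ×k matrix y over a commutative ring, det(Id_k + t·xᵀy) = ∑_{I,S} Δ_{I,S}(x) Δ_{S,I}(y) t^{|I|}, where the sum ranges over subsets I ⊆ {1,…,k} and S ⊆ {1,…,ℓ} with |I| = |S|, and Δ_{I,S}(x) denotes the minor of x with rows indexed by I and columns by S (with the convention that the empty minor is 1). -/
open Polynomial Matrix

/-- The minor of `x` with rows indexed by `I` and columns by `S` (in increasing order);
zero if the cardinalities differ. The empty minor is `1`. -/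
noncomputable def minor {R : Type*} [CommRing R] {k l : ℕ}
    (x : Matrix (Fin k) (Fin l) R) (I : Finset (Fin k)) (S : Finset (Fin l)) : R :=
  if h : I.card = S.card then
    (x.submatrix (fun a => I.orderEmbOfFin rfl a) (fun a => S.orderEmbOfFin h.symm a)).det
  else 0

section Aux

variable {R : Type*} [CommRing R]

lemma minor_eq_det {k l p : ℕ} (x : Matrix (Fin k) (Fin l) R)
    (I : Finset (Fin k)) (S : Finset (Fin l)) (hI : I.card = p) (hS : S.card = p) :
    minor x I S = (x.submatrix (I.orderEmbOfFin hI) (S.orderEmbOfFin hS)).det := by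
  subst hI
  rw [minor, dif_pos hS.symm]

end Aux

section Aux2
variable {R : Type*} [CommRing R]

lemma det_piecewise_one {k : ℕ} (M : Matrix (Fin k) (Fin k) R) (s : Finset (Fin k)) :
    (Matrix.of (s.piecewise M (1 : Matrix (Fin k) (Fin k) R))).det
      = (M.submatrix (s.orderEmbOfFin rfl) (s.orderEmbOfFin rfl)).det := by
  classical
  set f : Fin s.card ⊕ Fin sᶜ.card → Fin k :=
    Sum.elim (s.orderEmbOfFin rfl) (sᶜ.orderEmbOfFin rfl) with hf
  have hsurj : Function.Surjective f := by
    intro x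
    by_cases hx : x ∈ s
    · obtain ⟨i, hi⟩ : x ∈ Set.range (s.orderEmbOfFin rfl) := by
        rw [Finset.range_orderEmbOfFin]; exact hx
      exact ⟨Sum.inl i, hi⟩
    · obtain ⟨i, hi⟩ : x ∈ Set.range (sᶜ.orderEmbOfFin rfl) := by
        rw [Finset.range_orderEmbOfFin]; simpa using hx
      exact ⟨Sum.inr i, hi⟩
  have hbij : Function.Bijective f :=
    (Fintype.bijective_iff_surjective_and_card f).2
      ⟨hsurj, by simp [Finset.card_add_card_compl]⟩
  set e := Equiv.ofBijective f hbij with he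
  have heval : ∀ z, e z = f z := fun z => rfl
  rw [← Matrix.det_submatrix_equiv_self e]
  have hblock : (Matrix.of (s.piecewise M (1 : Matrix (Fin k) (Fin k) R))).submatrix e e
      = Matrix.fromBlocks
          (M.submatrix (s.orderEmbOfFin rfl) (s.orderEmbOfFin rfl))
          (M.submatrix (s.orderEmbOfFin rfl) (sᶜ.orderEmbOfFin rfl))
          0 1 := by
    ext i j
    cases i with
    | inl a =>
      have ha : (s.orderEmbOfFin rfl a : Fin k) ∈ s := Finset.orderEmbOfFin_mem _ _ _
      cases j with
      | inl b => simp [heval, hf, Finset.piecewise, ha]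
      | inr b => simp [heval, hf, Finset.piecewise, ha]
    | inr a =>
      have ha : (sᶜ.orderEmbOfFin rfl a : Fin k) ∉ s :=
        Finset.mem_compl.mp (Finset.orderEmbOfFin_mem sᶜ rfl a)
      cases j with
      | inl b =>
        have hne : (sᶜ.orderEmbOfFin rfl a : Fin k) ≠ s.orderEmbOfFin rfl b := by
          intro hcontra
          exact ha (hcontra ▸ Finset.orderEmbOfFin_mem _ _ _)
        simp [heval, hf, Finset.piecewise, ha, Matrix.one_apply, hne]
      | inr b =>
        by_cases hab : a = b
        · subst hab; simp [heval, hf, Finset.piecewise, ha, Matrix.one_apply]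
        · have hne : (sᶜ.orderEmbOfFin rfl a : Fin k) ≠ sᶜ.orderEmbOfFin rfl b := by
            intro hcontra
            exact hab ((sᶜ.orderEmbOfFin rfl).injective hcontra)
          simp [heval, hf, Finset.piecewise, ha, Matrix.one_apply, hne, hab]
  rw [hblock, Matrix.det_fromBlocks_zero₂₁, Matrix.det_one, mul_one]

lemma det_one_add_smul_eq_sum_minors {k : ℕ} (t : R) (M : Matrix (Fin k) (Fin k) R) :
    (1 + t • M).det = ∑ s : Finset (Fin k),
      t ^ s.card * (M.submatrix (s.orderEmbOfFin rfl) (s.orderEmbOfFin rfl)).det := by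
  classical
  set fML : MultilinearMap R (fun _ : Fin k => Fin k → R) R :=
    ((detRowAlternating : (Fin k → R) [⋀^Fin k]→ₗ[R] R) :
      MultilinearMap R (fun _ : Fin k => Fin k → R) R) with hfML
  set I1 : Matrix (Fin k) (Fin k) R := (1 : Matrix (Fin k) (Fin k) R) with hI1
  have h1 : (1 + t • M).det = ∑ s : Finset (Fin k), fML (s.piecewise (t • M) I1) := by
    have h := fML.map_add_univ (t • M) I1
    rw [add_comm (1 : Matrix (Fin k) (Fin k) R) (t • M)]
    exact h
  rw [h1]
  refine Finset.sum_congr rfl fun s _ => ?_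
  have h2 : s.piecewise (t • M) I1
      = s.piecewise (fun i => t • (s.piecewise M I1) i) (s.piecewise M I1) := by
    funext i
    by_cases h : i ∈ s
    · simp only [Finset.piecewise, h, if_pos]
      funext j; simp [Matrix.smul_apply]
    · simp [Finset.piecewise, h]
  rw [h2, fML.map_piecewise_smul]
  have h3 : fML (s.piecewise M I1) = (Matrix.of (s.piecewise M (1 : Matrix (Fin k) (Fin k) R))).det := rfl
  rw [h3, det_piecewise_one M s]
  simp [Finset.prod_const, smul_eq_mul]


lemma det_mul_rect {p l : ℕ} (A : Matrix (Fin p) (Fin l) R) (B : Matrix (Fin l) (Fin p) R) :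
    (A * B).det = ∑ S ∈ Finset.univ.filter (fun S : Finset (Fin l) => S.card = p),
      if hS : S.card = p then
        (A.submatrix id (S.orderEmbOfFin hS)).det * (B.submatrix (S.orderEmbOfFin hS) id).det
      else 0 := by
  classical
  set fML : MultilinearMap R (fun _ : Fin p => Fin p → R) R :=
    ((detRowAlternating : (Fin p → R) [⋀^Fin p]→ₗ[R] R) :
      MultilinearMap R (fun _ : Fin p => Fin p → R) R) with hfML
  have step1 : (A * B).det
      = ∑ r : Fin p → Fin l, (∏ i, A i (r i)) * (B.submatrix r id).det := by
    have hrow : (A * B) = Matrix.of fun i => ∑ j : Fin l, A i j • B j := by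
      ext i j'
      simp [Matrix.mul_apply, Finset.sum_apply]
    rw [hrow]
    have h := fML.map_sum (g := fun (i : Fin p) (j : Fin l) => A i j • B j)
    rw [show (Matrix.of fun i => ∑ j : Fin l, A i j • B j).det = _ from h]
    refine Finset.sum_congr rfl fun r _ => ?_
    have h2 := fML.map_smul_univ (fun i => A i (r i)) (fun i => B (r i))
    rw [show (fML fun i => A i (r i) • B (r i)) = _ from h2]
    rw [smul_eq_mul]
    rfl
  rw [step1, ← Finset.sum_filter_add_sum_filter_not Finset.univ
    (fun r : Fin p → Fin l => Function.Injective r)]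
  have hzero : ∑ r ∈ Finset.univ.filter
      (fun r : Fin p → Fin l => ¬ Function.Injective r),
      (∏ i, A i (r i)) * (B.submatrix r id).det = 0 := by
    refine Finset.sum_eq_zero fun r hr => ?_
    have hni : ¬ Function.Injective r := (Finset.mem_filter.mp hr).2
    obtain ⟨i, j, hij, hne⟩ := Function.not_injective_iff.mp hni
    have hdet : (B.submatrix r id).det = 0 :=
      Matrix.det_zero_of_row_eq hne (by funext c; simp [hij])
    rw [hdet, mul_zero]
  rw [hzero, add_zero]
  rw [← Finset.sum_fiberwise_of_maps_to
    (g := fun r : Fin p → Fin l => Finset.image r Finset.univ)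
    (t := Finset.univ.filter (fun S : Finset (Fin l) => S.card = p))
    (fun r hr => by
      have : Function.Injective r := (Finset.mem_filter.mp hr).2
      simp [Finset.card_image_of_injective _ this])]
  refine Finset.sum_congr rfl fun S hSmem => ?_
  have hS : S.card = p := (Finset.mem_filter.mp hSmem).2
  rw [dif_pos hS]
  set eS := S.orderEmbOfFin hS with heS
  have himg : Finset.image (⇑eS) Finset.univ = S := by
    ext a
    simp only [Finset.mem_image, Finset.mem_univ, true_and]
    constructor
    · rintro ⟨i, rfl⟩; exact Finset.orderEmbOfFin_mem _ _ _
    · intro ha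
      have : a ∈ Set.range ⇑eS := by rw [heS, Finset.range_orderEmbOfFin]; exact ha
      exact this
  have hfiber : ∑ r ∈ (Finset.univ.filter
        (fun r : Fin p → Fin l => Function.Injective r)).filter
        (fun r => Finset.image r Finset.univ = S),
      (∏ i, A i (r i)) * (B.submatrix r id).det
      = ∑ σ : Equiv.Perm (Fin p),
          (∏ i, A i (eS (σ i))) * (B.submatrix (⇑eS ∘ ⇑σ) id).det := by
    refine (Finset.sum_bij (fun (σ : Equiv.Perm (Fin p)) _ => ⇑eS ∘ ⇑σ) ?_ ?_ ?_ ?_).symm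
    · intro σ _
      rw [Finset.mem_filter, Finset.mem_filter]
      refine ⟨⟨Finset.mem_univ _, eS.injective.comp σ.injective⟩, ?_⟩
      rw [← Finset.image_image, ← himg]
      congr 1
      ext a
      simp only [Finset.mem_image, Finset.mem_univ, true_and, iff_true]
      exact ⟨σ.symm a, σ.apply_symm_apply a⟩
    · intro σ _ τ _ h
      exact Equiv.coe_fn_injective (funext fun i => eS.injective (congrFun h i))
    · intro r hr
      rw [Finset.mem_filter, Finset.mem_filter] at hr
      obtain ⟨⟨-, hrinj⟩, hrimg⟩ := hr
      have hri : ∀ i, r i ∈ S := fun i => by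
        rw [← hrimg]; exact Finset.mem_image_of_mem r (Finset.mem_univ i)
      set σ0 : Fin p → Fin p := fun i => (S.orderIsoOfFin hS).symm ⟨r i, hri i⟩ with hσ0
      have hσ0inj : Function.Injective σ0 := by
        intro i j h
        have h2 : (⟨r i, hri i⟩ : {x // x ∈ S}) = ⟨r j, hri j⟩ :=
          (S.orderIsoOfFin hS).symm.injective h
        exact hrinj (Subtype.ext_iff.mp h2)
      refine ⟨Equiv.ofBijective σ0 (Finite.injective_iff_bijective.mp hσ0inj),
        Finset.mem_univ _, ?_⟩
      funext i
      show eS (σ0 i) = r i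
      rw [heS, ← Finset.coe_orderIsoOfFin_apply, hσ0, OrderIso.apply_symm_apply]
    · intro σ _
      rfl
  rw [hfiber]
  have hsub : ∀ σ : Equiv.Perm (Fin p),
      (B.submatrix (⇑eS ∘ ⇑σ) id).det
        = (Equiv.Perm.sign σ : ℤ) * (B.submatrix (⇑eS) id).det := by
    intro σ
    rw [show B.submatrix (⇑eS ∘ ⇑σ) id = (B.submatrix (⇑eS) id).submatrix (⇑σ) id from rfl,
      Matrix.det_permute]
  have hAdet : (A.submatrix id ⇑eS).det
      = ∑ σ : Equiv.Perm (Fin p), (Equiv.Perm.sign σ : ℤ) * ∏ i, A i (eS (σ i)) := by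
    rw [← Matrix.det_transpose (A.submatrix id ⇑eS), Matrix.det_apply']
    refine Finset.sum_congr rfl fun σ _ => ?_
    congr 1
  rw [hAdet, Finset.sum_mul]
  refine Finset.sum_congr rfl fun σ _ => ?_
  rw [hsub σ]
  ring

end Aux2

/-- `det(Id_k + t · xᵀ y)` (here `x : k×ℓ`, `y : ℓ×k`, so the product `xᵀy` of the paper
is the `k×k` matrix product `x * y`) = ∑_{I,S, |I|=|S|} Δ_{I,S}(x) Δ_{S,I}(y) t^{|I|}`. -/
theorem det_one_add_X_smul_transpose_mul {R : Type*} [CommRing R] {k l : ℕ}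
    (x : Matrix (Fin k) (Fin l) R) (y : Matrix (Fin l) (Fin k) R) :
    ((1 : Matrix (Fin k) (Fin k) R[X]) + (X : R[X]) • ((x.map C) * (y.map C))).det
      = ∑ I : Finset (Fin k),
          ∑ S ∈ Finset.univ.filter (fun S : Finset (Fin l) => S.card = I.card),
            C (minor x I S * minor y S I) * X ^ I.card := by
  classical
  rw [← Matrix.map_mul, det_one_add_smul_eq_sum_minors (X : R[X]) ((x * y).map C)]
  refine Finset.sum_congr rfl fun I _ => ?_
  have h1 : ((x * y).map C).submatrix (⇑(I.orderEmbOfFin rfl)) (⇑(I.orderEmbOfFin rfl))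
      = ((x * y).submatrix (⇑(I.orderEmbOfFin rfl)) (⇑(I.orderEmbOfFin rfl))).map C := rfl
  rw [h1, show (((x * y).submatrix (⇑(I.orderEmbOfFin rfl)) (⇑(I.orderEmbOfFin rfl))).map ⇑C).det
      = C ((x * y).submatrix (⇑(I.orderEmbOfFin rfl)) (⇑(I.orderEmbOfFin rfl))).det from
    (RingHom.map_det C _).symm]
  have h2 : (x * y).submatrix (⇑(I.orderEmbOfFin rfl)) (⇑(I.orderEmbOfFin rfl))
      = (x.submatrix (⇑(I.orderEmbOfFin rfl)) id) * (y.submatrix id (⇑(I.orderEmbOfFin rfl))) :=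
    Matrix.submatrix_mul x y _ id _ Function.bijective_id
  rw [h2, det_mul_rect, map_sum, Finset.mul_sum]
  refine Finset.sum_congr rfl fun S hSmem => ?_
  have hS : S.card = I.card := (Finset.mem_filter.mp hSmem).2
  rw [dif_pos hS, minor_eq_det x I S rfl hS, minor_eq_det y S I hS rfl,
    Matrix.submatrix_submatrix, Matrix.submatrix_submatrix]
  simp only [Function.comp_id, Function.id_comp]
  exact mul_comm _ _
end

section
/- Special case of Cauchy–Binet/charpoly identity: det(I_k + xᵀy) = ∑_{I,S} Δ_{I,S}(x) Δ_{S,I}(y), summing over all pairs of subsets I ⊆ {1,…,k}, S ⊆ {1,…,ℓ} with |I| = |S| (including the empty pair contributing 1). -/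
open Matrix

namespace CauchyBinetAux

open Finset Equiv Function


variable {R : Type*} [CommRing R]

local notation "ε " σ:arg => ((Equiv.Perm.sign σ : ℤ) : R)

lemma det_piecewise_one {k : ℕ} (S : Finset (Fin k)) (M : Matrix (Fin k) (Fin k) R) :
    det (Matrix.of (S.piecewise (M : Fin k → Fin k → R) (1 : Matrix (Fin k) (Fin k) R))) =
      det (M.submatrix (fun a => S.orderEmbOfFin rfl a) (fun a => S.orderEmbOfFin rfl a)) := by
  classical
  set N : Matrix (Fin k) (Fin k) R :=
    Matrix.of (S.piecewise (M : Fin k → Fin k → R) (1 : Matrix (Fin k) (Fin k) R)) with hN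
  let e : {x // x ∈ S} ⊕ {x // ¬ x ∈ S} ≃ Fin k := Equiv.sumCompl (· ∈ S)
  have h1 : det N = det (N.submatrix e e) := (Matrix.det_submatrix_equiv_self e N).symm
  have h2 : N.submatrix e e =
      Matrix.fromBlocks
        (M.submatrix (fun a : {x // x ∈ S} => (a : Fin k)) (fun a : {x // x ∈ S} => (a : Fin k)))
        (M.submatrix (fun a : {x // x ∈ S} => (a : Fin k)) (fun a : {x // ¬ x ∈ S} => (a : Fin k)))
        0 1 := by
    ext i j
    cases i with
    | inl a =>
      cases j with
      | inl b => simp [hN, e, Finset.piecewise_eq_of_mem _ _ _ a.2, Finset.piecewise, a.2]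
      | inr b => simp [hN, e, Finset.piecewise_eq_of_mem _ _ _ a.2, Finset.piecewise, a.2]
    | inr a =>
      cases j with
      | inl b =>
        have : (a : Fin k) ≠ (b : Fin k) := fun h => a.2 (h ▸ b.2)
        simp [hN, e, Finset.piecewise_eq_of_notMem _ _ _ a.2, Finset.piecewise, a.2, Matrix.one_apply, this]
      | inr b =>
        simp [hN, e, Finset.piecewise_eq_of_notMem _ _ _ a.2, Finset.piecewise, a.2, Matrix.one_apply,
          Subtype.ext_iff]
  have h3 : det (M.submatrix (fun a : {x // x ∈ S} => (a : Fin k))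
        (fun a : {x // x ∈ S} => (a : Fin k)))
      = det (M.submatrix (fun a => S.orderEmbOfFin rfl a) (fun a => S.orderEmbOfFin rfl a)) := by
    have he : M.submatrix (fun a => S.orderEmbOfFin rfl a) (fun a => S.orderEmbOfFin rfl a)
        = (M.submatrix (fun a : {x // x ∈ S} => (a : Fin k))
            (fun a : {x // x ∈ S} => (a : Fin k))).submatrix
          ((S.orderIsoOfFin rfl).toEquiv) ((S.orderIsoOfFin rfl).toEquiv) := by
      ext i j
      simp [Finset.coe_orderIsoOfFin_apply]
    rw [he, Matrix.det_submatrix_equiv_self]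
  rw [h1, h2, Matrix.det_fromBlocks_zero₂₁, det_one, mul_one, h3]

lemma det_one_add_eq_sum_principal {k : ℕ} (M : Matrix (Fin k) (Fin k) R) :
    det (1 + M) = ∑ I : Finset (Fin k),
      det (M.submatrix (fun a => I.orderEmbOfFin rfl a) (fun a => I.orderEmbOfFin rfl a)) := by
  classical
  have h := (Matrix.detRowAlternating :
      AlternatingMap R (Fin k → R) R (Fin k)).toMultilinearMap.map_add_univ
      (fun i => M i) (fun i => (1 : Matrix (Fin k) (Fin k) R) i)
  have h0 : det (1 + M) = (Matrix.detRowAlternating :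
      AlternatingMap R (Fin k → R) R (Fin k)).toMultilinearMap
        ((fun i => M i) + fun i => (1 : Matrix (Fin k) (Fin k) R) i) := by
    rw [add_comm]
    rfl
  rw [h0, h]
  exact Finset.sum_congr rfl fun I _ => det_piecewise_one I M

lemma det_mul_aux' {r l : ℕ} {A : Matrix (Fin r) (Fin l) R} {B : Matrix (Fin l) (Fin r) R}
    {p : Fin r → Fin l} (H : ¬Injective p) :
    (∑ σ : Equiv.Perm (Fin r), ε σ * ∏ x, A (σ x) (p x) * B (p x) x) = 0 := by
  obtain ⟨i, j, hpij, hij⟩ : ∃ i j, p i = p j ∧ i ≠ j := by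
    rw [Injective] at H; push_neg at H; exact H
  exact Finset.sum_involution (fun σ _ => σ * Equiv.swap i j)
    (fun σ _ => by
      have : (∏ x, A (σ x) (p x)) = ∏ x, A ((σ * Equiv.swap i j) x) (p x) :=
        Fintype.prod_equiv (Equiv.swap i j) _ _ (by simp [Equiv.apply_swap_eq_self hpij])
      simp [this, Equiv.Perm.sign_swap hij, prod_mul_distrib])
    (fun σ _ _ => (not_congr Equiv.mul_swap_eq_iff).mpr hij) (fun _ _ => mem_univ _)
    fun σ _ => Equiv.mul_swap_involutive i j σ

lemma sum_perm_sum_perm_eq {r : ℕ} (M N : Matrix (Fin r) (Fin r) R) :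
    (∑ τ : Equiv.Perm (Fin r), ∑ σ : Equiv.Perm (Fin r),
        ε σ * ∏ i, M (σ i) (τ i) * N (τ i) i) = det (M * N) := by
  symm
  calc
    det (M * N) = ∑ p : Fin r → Fin r, ∑ σ : Equiv.Perm (Fin r),
        ε σ * ∏ i, M (σ i) (p i) * N (p i) i := by
      simp only [det_apply', mul_apply, prod_univ_sum, mul_sum, Fintype.piFinset_univ]
      rw [Finset.sum_comm]
    _ = ∑ p ∈ Finset.univ.filter (fun p : Fin r → Fin r => Injective p),
        ∑ σ : Equiv.Perm (Fin r), ε σ * ∏ i, M (σ i) (p i) * N (p i) i := by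
      refine (sum_subset (filter_subset _ _) fun f _ hinj => det_mul_aux' ?_).symm
      simpa only [true_and, mem_filter, mem_univ] using hinj
    _ = ∑ τ : Equiv.Perm (Fin r), ∑ σ : Equiv.Perm (Fin r),
        ε σ * ∏ i, M (σ i) (τ i) * N (τ i) i := by
      refine Finset.sum_bij (fun p h => Equiv.ofBijective p
        (Finite.injective_iff_bijective.mp (mem_filter.mp h).2)) (fun _ _ => mem_univ _)
        (fun _ _ _ _ h => by injection h)
        (fun b _ => ⟨b, mem_filter.mpr ⟨mem_univ _, b.injective⟩, Equiv.coe_fn_injective rfl⟩)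
        (fun _ _ => rfl)

lemma fiber_sum_eq {r l : ℕ} (A : Matrix (Fin r) (Fin l) R) (B : Matrix (Fin l) (Fin r) R)
    (S : Finset (Fin l)) (hS : S.card = r) :
    (∑ p ∈ Finset.univ.filter
        (fun p : Fin r → Fin l => Injective p ∧ Finset.image p Finset.univ = S),
      ∑ σ : Equiv.Perm (Fin r), ε σ * ∏ i, A (σ i) (p i) * B (p i) i)
    = det ((A.submatrix id (fun a => S.orderEmbOfFin hS a)) *
        (B.submatrix (fun a => S.orderEmbOfFin hS a) id)) := by
  classical
  rw [← sum_perm_sum_perm_eq]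
  refine Finset.sum_bij' (i := fun p hp => Equiv.ofBijective
      (fun a => (S.orderIsoOfFin hS).symm ⟨p a, by
        have himg := (mem_filter.mp hp).2.2
        exact himg ▸ Finset.mem_image_of_mem p (mem_univ a)⟩)
      (Finite.injective_iff_bijective.mp (fun a b hab => (mem_filter.mp hp).2.1
        (by simpa [Subtype.ext_iff] using (S.orderIsoOfFin hS).symm.injective hab))))
    (j := fun τ _ => fun a => S.orderEmbOfFin hS (τ a)) ?_ ?_ ?_ ?_ ?_
  · intro p hp; exact mem_univ _
  · intro τ _
    rw [mem_filter]
    refine ⟨mem_univ _, fun a b hab => τ.injective ((S.orderEmbOfFin hS).injective hab), ?_⟩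
    ext z
    simp only [Finset.mem_image, mem_univ, true_and]
    constructor
    · rintro ⟨a, rfl⟩; exact Finset.orderEmbOfFin_mem S hS (τ a)
    · intro hz
      obtain ⟨i, hi⟩ : ∃ i, S.orderEmbOfFin hS i = z := by
        have := Finset.range_orderEmbOfFin S hS
        have hz' : z ∈ Set.range (S.orderEmbOfFin hS) := by rw [this]; exact hz
        exact hz'
      exact ⟨τ.symm i, by simp [hi]⟩
  · intro p hp
    funext a
    simp [← Finset.coe_orderIsoOfFin_apply]
  · intro τ _
    ext a
    exact congrArg Fin.val ((S.orderIsoOfFin hS).symm_apply_eq.mpr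
      (Subtype.ext (Finset.coe_orderIsoOfFin_apply S hS (τ a)).symm))
  · intro p hp
    refine Finset.sum_congr rfl fun σ _ => ?_
    congr 1
    refine Finset.prod_congr rfl fun i _ => ?_
    simp [← Finset.coe_orderIsoOfFin_apply]

/-- Cauchy–Binet. -/
lemma det_mul_eq_sum_subsets {r l : ℕ} (A : Matrix (Fin r) (Fin l) R)
    (B : Matrix (Fin l) (Fin r) R) :
    det (A * B) = ∑ S : {S : Finset (Fin l) // S.card = r},
      det (A.submatrix id (fun a => S.1.orderEmbOfFin S.2 a)) *
        det (B.submatrix (fun a => S.1.orderEmbOfFin S.2 a) id) := by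
  classical
  calc
    det (A * B) = ∑ p : Fin r → Fin l, ∑ σ : Equiv.Perm (Fin r),
        ε σ * ∏ i, A (σ i) (p i) * B (p i) i := by
      simp only [det_apply', mul_apply, prod_univ_sum, mul_sum, Fintype.piFinset_univ]
      rw [Finset.sum_comm]
    _ = ∑ p ∈ Finset.univ.filter (fun p : Fin r → Fin l => Injective p),
        ∑ σ : Equiv.Perm (Fin r), ε σ * ∏ i, A (σ i) (p i) * B (p i) i := by
      refine (sum_subset (filter_subset _ _) fun f _ hinj => det_mul_aux' ?_).symm
      simpa only [true_and, mem_filter, mem_univ] using hinj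
    _ = ∑ S : Finset (Fin l), ∑ p ∈ Finset.univ.filter
          (fun p : Fin r → Fin l => Injective p ∧ Finset.image p Finset.univ = S),
        ∑ σ : Equiv.Perm (Fin r), ε σ * ∏ i, A (σ i) (p i) * B (p i) i := by
      rw [← Finset.sum_fiberwise (Finset.univ.filter (fun p : Fin r → Fin l => Injective p))
        (fun p => Finset.image p Finset.univ)]
      exact Finset.sum_congr rfl fun S _ => by rw [Finset.filter_filter]
    _ = ∑ S ∈ Finset.univ.filter (fun S : Finset (Fin l) => S.card = r),
        ∑ p ∈ Finset.univ.filter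
          (fun p : Fin r → Fin l => Injective p ∧ Finset.image p Finset.univ = S),
        ∑ σ : Equiv.Perm (Fin r), ε σ * ∏ i, A (σ i) (p i) * B (p i) i := by
      refine (Finset.sum_subset (filter_subset _ _) fun S _ hS => ?_).symm
      rw [mem_filter, not_and] at hS
      have hcard : ¬ S.card = r := hS (mem_univ _)
      refine Finset.sum_eq_zero fun p hp => absurd ?_ hcard
      obtain ⟨-, hinj, himg⟩ := mem_filter.mp hp
      rw [← himg, Finset.card_image_of_injective _ hinj, Finset.card_univ, Fintype.card_fin]
    _ = ∑ S : {S : Finset (Fin l) // S.card = r},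
        ∑ p ∈ Finset.univ.filter
          (fun p : Fin r → Fin l => Injective p ∧ Finset.image p Finset.univ = S.1),
        ∑ σ : Equiv.Perm (Fin r), ε σ * ∏ i, A (σ i) (p i) * B (p i) i :=
      Finset.sum_subtype _ (by simp) _
    _ = ∑ S : {S : Finset (Fin l) // S.card = r},
        det (A.submatrix id (fun a => S.1.orderEmbOfFin S.2 a)) *
          det (B.submatrix (fun a => S.1.orderEmbOfFin S.2 a) id) := by
      refine Finset.sum_congr rfl fun S _ => ?_
      rw [fiber_sum_eq A B S.1 S.2, det_mul]


end CauchyBinetAux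

open CauchyBinetAux in
/-- Cauchy–Binet/characteristic polynomial special case:
`det(I_k + xᵀ y) = ∑_{I,S, |I|=|S|} Δ_{I,S}(x) Δ_{S,I}(y)`, the empty pair contributing `1`.
Here `x : k×ℓ`, `y : ℓ×k`, so the product `xᵀ y` of the paper is the `k×k` product `x * y`. -/
theorem det_one_add_eq_sum_minors {R : Type*} [CommRing R] {k l : ℕ}
    (x : Matrix (Fin k) (Fin l) R) (y : Matrix (Fin l) (Fin k) R) :
    ((1 : Matrix (Fin k) (Fin k) R) + x * y).det
      = ∑ I : Finset (Fin k),
          ∑ S ∈ Finset.univ.filter (fun S : Finset (Fin l) => S.card = I.card),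
            minor x I S * minor y S I := by
  classical
  unfold minor
  rw [det_one_add_eq_sum_principal]
  refine Finset.sum_congr rfl fun I _ => ?_
  have hsub : (x * y).submatrix (fun a => I.orderEmbOfFin rfl a) (fun a => I.orderEmbOfFin rfl a)
      = (x.submatrix (fun a => I.orderEmbOfFin rfl a) id) *
        (y.submatrix id (fun a => I.orderEmbOfFin rfl a)) := by
    ext i j; simp [mul_apply]
  rw [hsub, det_mul_eq_sum_subsets,
    Finset.sum_subtype (p := fun S : Finset (Fin l) => S.card = I.card)
      (Finset.univ.filter (fun S : Finset (Fin l) => S.card = I.card)) (by simp)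
      (fun S => (if h : I.card = S.card then
        (x.submatrix (fun a => I.orderEmbOfFin rfl a) (fun a => S.orderEmbOfFin h.symm a)).det
        else 0) * (if h : S.card = I.card then
        (y.submatrix (fun a => S.orderEmbOfFin rfl a) (fun a => I.orderEmbOfFin h.symm a)).det
        else 0))]
  refine Finset.sum_congr rfl fun S _ => ?_
  obtain ⟨S, hS⟩ := S
  rw [dif_pos hS.symm, dif_pos hS]
  have hx : (x.submatrix (fun a => I.orderEmbOfFin rfl a) id).submatrix id
        (fun a => S.orderEmbOfFin hS a)
      = x.submatrix (fun a => I.orderEmbOfFin rfl a)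
        (fun a => S.orderEmbOfFin (Eq.symm (Eq.symm hS)) a) := rfl
  have hy : det ((y.submatrix id (fun a => I.orderEmbOfFin rfl a)).submatrix
        (fun a => S.orderEmbOfFin hS a) id)
      = det (y.submatrix (fun a => S.orderEmbOfFin rfl a)
          (fun a => I.orderEmbOfFin (Eq.symm hS) a)) := by
    rw [← Matrix.det_submatrix_equiv_self (finCongr hS)
      ((y.submatrix id (fun a => I.orderEmbOfFin rfl a)).submatrix
        (fun a => S.orderEmbOfFin hS a) id)]
    congr 1
  rw [hx, hy]
end

section
/- The counting pairing theorem for #SAT: with G = ⊗ᵢ gᵢ where gᵢ = ⊗ₛ a_{is|0} + ⊗ₛ a_{is|1}, and R = ⊗ₛ rₛ where rₛ = ∑_{(ε) : c_s satisfied by (ε)} α_{i₁,s|ε₁}⊗⋯⊗α_{i_d,s|ε_d}, the pairing ⟨G, R⟩ equals the number of assignments x ∈ {0,1}^n (over 𝔽₂) satisfying all the equations c₁,…,c_m simultaneously. -/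
/-- The counting pairing theorem for `#SAT`.  Variables `x₁,…,xₙ` and equations
`c₁,…,c_m` over `𝔽₂` are encoded by the occurrence relation `occurs`; an edge of the
bipartite graph is a pair `(i,s)` with `occurs i s`.  For an assignment
`η : E → {0,1}` of the edges, the coefficient of `G = ⊗ᵢ gᵢ` at `η` is
`∏ᵢ #{b : η ≡ b on the edges at i}` (which is `1` if `η` is constant at `i`, `0` if not,
and `2` for an isolated variable, matching `gᵢ = ⊗ₛ a_{is|0} + ⊗ₛ a_{is|1}`), and the
coefficient of `R = ⊗ₛ rₛ` at `η` is `∏ₛ [cₛ is satisfied by the local assignment η]`.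
The pairing `⟨G, R⟩ = ∑_η G_η R_η` equals the number of assignments
`x ∈ {0,1}ⁿ` satisfying all the equations `c₁,…,c_m` simultaneously.  The hypothesis
`hsat` states that each `cₛ` depends only on the variables occurring in it. -/
theorem counting_pairing_sharpSAT (n m : ℕ) (occurs : Fin n → Fin m → Bool)
    (sat : Fin m → (Fin n → Fin 2) → Bool)
    (hsat : ∀ s x x', (∀ i, occurs i s = true → x i = x' i) → sat s x = sat s x') :
    (∑ η : {p : Fin n × Fin m // occurs p.1 p.2 = true} → Fin 2,
        (∏ i : Fin n,
          ((Finset.univ.filter (fun b : Fin 2 =>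
              ∀ e : {p : Fin n × Fin m // occurs p.1 p.2 = true},
                e.1.1 = i → η e = b)).card : ℂ)) *
        ∏ s : Fin m,
          (if sat s (fun i => if h : occurs i s = true then η ⟨(i, s), h⟩ else 0) = true
            then (1 : ℂ) else 0))
      = ((Finset.univ.filter
            (fun x : Fin n → Fin 2 => ∀ s, sat s x = true)).card : ℂ) := by

  classical
  have hcard : ∀ η : {p : Fin n × Fin m // occurs p.1 p.2 = true} → Fin 2,
      (∏ i : Fin n, ((Finset.univ.filter (fun b : Fin 2 =>
          ∀ e : {p : Fin n × Fin m // occurs p.1 p.2 = true},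
            e.1.1 = i → η e = b)).card : ℂ))
        = ∑ x : Fin n → Fin 2,
            if (∀ e : {p : Fin n × Fin m // occurs p.1 p.2 = true}, η e = x e.1.1)
              then (1:ℂ) else 0 := by
    intro η
    have h1 : ∀ i : Fin n, ((Finset.univ.filter (fun b : Fin 2 =>
        ∀ e : {p : Fin n × Fin m // occurs p.1 p.2 = true}, e.1.1 = i → η e = b)).card : ℂ)
        = ∑ b : Fin 2, if (∀ e : {p : Fin n × Fin m // occurs p.1 p.2 = true},
            e.1.1 = i → η e = b) then (1:ℂ) else 0 := by
      intro i; rw [Finset.sum_boole]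
    simp_rw [h1]
    rw [Finset.prod_univ_sum (fun _ => Finset.univ)]
    rw [Fintype.piFinset_univ]
    refine Finset.sum_congr rfl fun x _ => ?_
    rw [Finset.prod_boole]
    congr 1
    simp only [eq_iff_iff]
    constructor
    · intro h e; exact h e.1.1 (Finset.mem_univ _) e rfl
    · intro h i _ e he; rw [h e, he]
  simp_rw [hcard, Finset.sum_mul]
  rw [Finset.sum_comm]
  have key : ∀ x : Fin n → Fin 2,
      (∑ η : {p : Fin n × Fin m // occurs p.1 p.2 = true} → Fin 2,
        (if (∀ e : {p : Fin n × Fin m // occurs p.1 p.2 = true}, η e = x e.1.1)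
            then (1:ℂ) else 0) *
        ∏ s : Fin m,
          (if sat s (fun i => if h : occurs i s = true then η ⟨(i, s), h⟩ else 0) = true
            then (1 : ℂ) else 0))
      = if (∀ s, sat s x = true) then (1:ℂ) else 0 := by
    intro x
    have hc : ∀ η : {p : Fin n × Fin m // occurs p.1 p.2 = true} → Fin 2,
        (∀ e : {p : Fin n × Fin m // occurs p.1 p.2 = true}, η e = x e.1.1)
          ↔ η = fun e => x e.1.1 := by
      intro η; constructor
      · intro h; funext e; exact h e
      · intro h e; rw [h]
    simp_rw [hc, ite_mul, one_mul, zero_mul]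
    rw [Finset.sum_ite_eq' Finset.univ
      (fun e : {p : Fin n × Fin m // occurs p.1 p.2 = true} => x e.1.1)
      (fun η => ∏ s : Fin m,
        (if sat s (fun i => if h : occurs i s = true then η ⟨(i, s), h⟩ else 0) = true
          then (1 : ℂ) else 0))]
    simp only [Finset.mem_univ, if_true]
    have hs : ∀ s : Fin m,
        sat s (fun i => if h : occurs i s = true then x i else 0) = sat s x := by
      intro s
      apply hsat
      intro i hi
      simp [hi]
    simp_rw [hs]
    rw [Finset.prod_boole]
    congr 1
    simp only [eq_iff_iff]
    exact ⟨fun h s => h s (Finset.mem_univ _), fun h s _ => h s⟩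
  simp_rw [key]
  rw [Finset.sum_boole]
end
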